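/- Fix S > 0 and ξ ∈ ℝ, and define f(x) = N(ξ + (1/S)·ln x) − x^{−2ξ/S}·N(ξ − (1/S)·ln x). If −S/2 < ξ < 0, then lim_{x→0+} f'(x) = −∞; if ξ = −S/2, then lim_{x→0+} f'(x) = −1; and if ξ < −S/2, then lim_{x→0+} f'(x) = 0. -/

import Mathlib

open Real Set Filter Topology

noncomputable def stdNormalCDF (x : ℝ) : ℝ :=
  (Real.sqrt (2 * Real.pi))⁻¹ * ∫ t in Set.Iic x, Real.exp (-t ^ 2 / 2)

lemma gauss_integrable : MeasureTheory.Integrable (fun t : ℝ => Real.exp (-t ^ 2 / 2)) := by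
  have := integrable_exp_neg_mul_sq (b := (1/2 : ℝ)) (by norm_num)
  convert this using 2 with t
  ring_nf

lemma gauss_cont : Continuous (fun t : ℝ => Real.exp (-t ^ 2 / 2)) := by
  continuity

lemma stdNormalCDF_eq (x : ℝ) : stdNormalCDF x =
    (Real.sqrt (2 * Real.pi))⁻¹ *
      ((∫ t in Set.Iic (0:ℝ), Real.exp (-t ^ 2 / 2)) + ∫ t in (0:ℝ)..x, Real.exp (-t ^ 2 / 2)) := by
  rw [stdNormalCDF]
  congr 1
  have := intervalIntegral.integral_Iic_sub_Iic (μ := MeasureTheory.volume)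
    (f := fun t : ℝ => Real.exp (-t ^ 2 / 2)) (a := (0:ℝ)) (b := x)
    gauss_integrable.integrableOn gauss_integrable.integrableOn
  linarith [this]

lemma hasDerivAt_stdNormalCDF (x : ℝ) :
    HasDerivAt stdNormalCDF ((Real.sqrt (2 * Real.pi))⁻¹ * Real.exp (-x ^ 2 / 2)) x := by
  have hF : HasDerivAt (fun y => ∫ t in (0:ℝ)..y, Real.exp (-t ^ 2 / 2))
      (Real.exp (-x ^ 2 / 2)) x := by
    exact intervalIntegral.integral_hasDerivAt_right
      (gauss_integrable.intervalIntegrable)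
      gauss_cont.aestronglyMeasurable.stronglyMeasurableAtFilter
      gauss_cont.continuousAt
  have h := ((hF.const_add (∫ t in Set.Iic (0:ℝ), Real.exp (-t ^ 2 / 2))).const_mul
    ((Real.sqrt (2 * Real.pi))⁻¹))
  refine h.congr_of_eventuallyEq ?_
  filter_upwards with y
  rw [stdNormalCDF_eq]

lemma tendsto_stdNormalCDF_atTop : Tendsto stdNormalCDF atTop (𝓝 1) := by
  have hInt : Tendsto (fun y => ∫ t in (0:ℝ)..y, Real.exp (-t ^ 2 / 2)) atTop
      (𝓝 (∫ t in Set.Ioi (0:ℝ), Real.exp (-t ^ 2 / 2))) :=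
    MeasureTheory.intervalIntegral_tendsto_integral_Ioi 0 gauss_integrable.integrableOn tendsto_id
  have h : Tendsto stdNormalCDF atTop
      (𝓝 ((Real.sqrt (2 * Real.pi))⁻¹ *
        ((∫ t in Set.Iic (0:ℝ), Real.exp (-t ^ 2 / 2)) + ∫ t in Set.Ioi (0:ℝ), Real.exp (-t ^ 2 / 2)))) := by
    have := (hInt.const_add (∫ t in Set.Iic (0:ℝ), Real.exp (-t ^ 2 / 2))).const_mul
      ((Real.sqrt (2 * Real.pi))⁻¹)
    refine this.congr fun y => ?_
    rw [stdNormalCDF_eq]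
  convert h using 2
  rw [intervalIntegral.integral_Iic_add_Ioi gauss_integrable.integrableOn gauss_integrable.integrableOn]
  have : (∫ t : ℝ, Real.exp (-t ^ 2 / 2)) = Real.sqrt (2 * Real.pi) := by
    have := integral_gaussian (1/2 : ℝ)
    rw [show Real.pi / (1/2) = 2 * Real.pi by ring] at this
    rw [← this]
    congr 1 with t
    ring_nf
  rw [this, inv_mul_cancel₀]
  positivity

theorem f_deriv_limits_at_zero (S ξ : ℝ) (hS : 0 < S) (hξ : ξ < 0)
    (f : ℝ → ℝ)
    (hf : ∀ x > 0, f x = stdNormalCDF (ξ + (1 / S) * Real.log x) -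
        x ^ (-2 * ξ / S) * stdNormalCDF (ξ - (1 / S) * Real.log x)) :
    (-S / 2 < ξ → Filter.Tendsto (deriv f) (nhdsWithin 0 (Set.Ioi 0)) Filter.atBot) ∧
    (ξ = -S / 2 → Filter.Tendsto (deriv f) (nhdsWithin 0 (Set.Ioi 0)) (nhds (-1))) ∧
    (ξ < -S / 2 → Filter.Tendsto (deriv f) (nhdsWithin 0 (Set.Ioi 0)) (nhds 0)) := by
  set c : ℝ := (Real.sqrt (2 * Real.pi))⁻¹ with hc
  set g : ℝ → ℝ := fun x => c * Real.exp (-(ξ - (1/S) * Real.log x) ^ 2 / 2) +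
      ξ * stdNormalCDF (ξ - (1/S) * Real.log x) with hg
  set E : ℝ → ℝ := fun x => (2/S) * x ^ (-2*ξ/S - 1) * g x with hE
  -- derivative formula
  have hderiv : ∀ x ∈ Set.Ioi (0:ℝ), deriv f x = E x := by
    intro x hx
    have hx0 : (0:ℝ) < x := hx
    have hlog : HasDerivAt Real.log x⁻¹ x := Real.hasDerivAt_log hx0.ne'
    have h1 : HasDerivAt (fun y => ξ + (1/S) * Real.log y) ((1/S) * x⁻¹) x :=
      (hlog.const_mul (1/S)).const_add ξ
    have h2 : HasDerivAt (fun y => ξ - (1/S) * Real.log y) (0 - (1/S) * x⁻¹) x :=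
      (hasDerivAt_const x ξ).sub (hlog.const_mul (1/S))
    have hN1 : HasDerivAt (fun y => stdNormalCDF (ξ + (1/S) * Real.log y))
        (c * Real.exp (-(ξ + (1/S) * Real.log x) ^ 2 / 2) * ((1/S) * x⁻¹)) x :=
      (hasDerivAt_stdNormalCDF _).comp x h1
    have hN2 : HasDerivAt (fun y => stdNormalCDF (ξ - (1/S) * Real.log y))
        (c * Real.exp (-(ξ - (1/S) * Real.log x) ^ 2 / 2) * (0 - (1/S) * x⁻¹)) x :=
      (hasDerivAt_stdNormalCDF _).comp x h2
    have hpow : HasDerivAt (fun y : ℝ => y ^ (-2*ξ/S))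
        ((-2*ξ/S) * x ^ (-2*ξ/S - 1)) x :=
      Real.hasDerivAt_rpow_const (Or.inl hx0.ne')
    have hRHS : HasDerivAt (fun y => stdNormalCDF (ξ + (1/S) * Real.log y) -
        y ^ (-2*ξ/S) * stdNormalCDF (ξ - (1/S) * Real.log y))
        ((c * Real.exp (-(ξ + (1/S) * Real.log x) ^ 2 / 2) * ((1/S) * x⁻¹)) -
         ((-2*ξ/S) * x ^ (-2*ξ/S - 1) * stdNormalCDF (ξ - (1/S) * Real.log x) +
          x ^ (-2*ξ/S) * (c * Real.exp (-(ξ - (1/S) * Real.log x) ^ 2 / 2) * (0 - (1/S) * x⁻¹)))) x :=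
      hN1.sub (hpow.mul hN2)
    have hfeq : f =ᶠ[𝓝 x] fun y => stdNormalCDF (ξ + (1/S) * Real.log y) -
        y ^ (-2*ξ/S) * stdNormalCDF (ξ - (1/S) * Real.log y) := by
      filter_upwards [isOpen_Ioi.mem_nhds hx] with y hy
      exact hf y hy
    rw [hfeq.deriv_eq, hRHS.deriv]
    -- now algebra
    have key : Real.exp (-(ξ + (1/S) * Real.log x) ^ 2 / 2) =
        x ^ (-2*ξ/S) * Real.exp (-(ξ - (1/S) * Real.log x) ^ 2 / 2) := by
      rw [Real.rpow_def_of_pos hx0, ← Real.exp_add]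
      congr 1
      field_simp
      ring
    have hx1 : x ^ (-2*ξ/S - 1) = x ^ (-2*ξ/S) * x⁻¹ := by
      rw [Real.rpow_sub hx0, Real.rpow_one, div_eq_mul_inv]
    have hx2 : x ^ (-2*ξ/S) = x ^ (-2*ξ/S - 1) * x := by
      rw [hx1, mul_assoc, inv_mul_cancel₀ hx0.ne', mul_one]
    rw [hE, hg, key, hx2]
    field_simp
    ring
  -- replace deriv f with E along the filter
  have hEv : deriv f =ᶠ[𝓝[>] (0:ℝ)] E := by
    filter_upwards [self_mem_nhdsWithin] with x hx using hderiv x hx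
  -- limit of g is ξ
  have hu : Tendsto (fun x => ξ - (1/S) * Real.log x) (𝓝[>] (0:ℝ)) atTop := by
    have h1 : Tendsto (fun x => (1/S) * Real.log x) (𝓝[>] (0:ℝ)) atBot :=
      (Real.tendsto_log_nhdsGT_zero).const_mul_atBot (by positivity)
    have h2 := tendsto_atTop_add_const_left _ ξ (tendsto_neg_atBot_atTop.comp h1)
    refine h2.congr fun x => ?_
    simp [sub_eq_add_neg]
  have hexp0 : Tendsto (fun t : ℝ => Real.exp (-t ^ 2 / 2)) atTop (𝓝 0) := by
    apply Real.tendsto_exp_atBot.comp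
    have h2 : Tendsto (fun t : ℝ => t ^ 2 / 2) atTop atTop :=
      (tendsto_pow_atTop two_ne_zero).atTop_div_const (by norm_num)
    have := tendsto_neg_atTop_atBot.comp h2
    refine this.congr fun t => ?_
    simp [neg_div]
  have hg_lim : Tendsto g (𝓝[>] (0:ℝ)) (𝓝 ξ) := by
    have h1 : Tendsto (fun x => c * Real.exp (-(ξ - (1/S) * Real.log x) ^ 2 / 2))
        (𝓝[>] (0:ℝ)) (𝓝 (c * 0)) := ((hexp0.comp hu).const_mul c)
    have h2 : Tendsto (fun x => ξ * stdNormalCDF (ξ - (1/S) * Real.log x))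
        (𝓝[>] (0:ℝ)) (𝓝 (ξ * 1)) := (tendsto_stdNormalCDF_atTop.comp hu).const_mul ξ
    have h3 := h1.add h2
    rw [show c * 0 + ξ * 1 = ξ by ring] at h3
    exact h3
  refine ⟨?_, ?_, ?_⟩
  · -- case -S/2 < ξ : exponent < 0, x^q → +∞
    intro hcase
    have hq : -2*ξ/S - 1 < 0 := by
      rw [sub_neg, div_lt_one hS]
      linarith
    have hxq : Tendsto (fun x : ℝ => x ^ (-2*ξ/S - 1)) (𝓝[>] (0:ℝ)) atTop := by
      have h1 : Tendsto (fun x : ℝ => Real.log x * (-2*ξ/S - 1)) (𝓝[>] (0:ℝ)) atTop :=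
        Real.tendsto_log_nhdsGT_zero.atBot_mul_const_of_neg hq
      have h2 := Real.tendsto_exp_atTop.comp h1
      refine h2.congr' ?_
      filter_upwards [self_mem_nhdsWithin] with x hx
      rw [Function.comp_apply, ← Real.rpow_def_of_pos hx]
    have h3 : Tendsto (fun x : ℝ => (2/S) * x ^ (-2*ξ/S - 1)) (𝓝[>] (0:ℝ)) atTop :=
      hxq.const_mul_atTop (by positivity)
    have := h3.atTop_mul_neg hξ hg_lim
    exact Tendsto.congr' hEv.symm this
  · -- case ξ = -S/2 : exponent = 0
    intro hcase
    have hq : -2*ξ/S - 1 = 0 := by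
      rw [hcase]; field_simp; ring
    have hE' : E =ᶠ[𝓝[>] (0:ℝ)] fun x => (2/S) * g x := by
      filter_upwards with x
      show (2/S) * x ^ (-2*ξ/S - 1) * g x = (2/S) * g x
      rw [hq, Real.rpow_zero, mul_one]
    have h1 : Tendsto (fun x => (2/S) * g x) (𝓝[>] (0:ℝ)) (𝓝 ((2/S) * ξ)) :=
      hg_lim.const_mul _
    have h2 : (2/S) * ξ = -1 := by
      rw [hcase]; field_simp
    rw [h2] at h1
    exact Tendsto.congr' (hEv.trans hE').symm h1
  · -- case ξ < -S/2 : exponent > 0, x^q → 0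
    intro hcase
    have hq : 0 < -2*ξ/S - 1 := by
      rw [sub_pos, lt_div_iff₀ hS]
      linarith
    have hxq : Tendsto (fun x : ℝ => x ^ (-2*ξ/S - 1)) (𝓝[>] (0:ℝ)) (𝓝 0) := by
      have h1 : Tendsto (fun x : ℝ => Real.log x * (-2*ξ/S - 1)) (𝓝[>] (0:ℝ)) atBot :=
        Real.tendsto_log_nhdsGT_zero.atBot_mul_const hq
      have h2 := Real.tendsto_exp_atBot.comp h1
      refine h2.congr' ?_
      filter_upwards [self_mem_nhdsWithin] with x hx
      rw [Function.comp_apply, ← Real.rpow_def_of_pos hx]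
    have h3 : Tendsto E (𝓝[>] (0:ℝ)) (𝓝 ((2/S) * 0 * ξ)) :=
      ((hxq.const_mul (2/S)).mul hg_lim)
    rw [show (2/S) * 0 * ξ = 0 by ring] at h3
    exact Tendsto.congr' hEv.symm h3
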